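/- For every natural number n, every n-times continuously differentiable complex-valued function u on an interval J that never vanishes on J, and all n-times continuously differentiable complex-valued functions f, g on J, one has Φ_{n,u}(f,g) = Σ_{r=0}^{n} C(n,r) · Φ_{n-r,u}(1,1) · D^r(fg), where Φ_{n,u}(f,g) = Σ_{p=0}^{n} C(n,p) · D^p(u^p f) · D^{n-p}(u^{-p} g). -/

import Mathlib

open scoped Nat BigOperators

open Finset

/-- The bilinear map `Φ_{n,u}(f,g) = Σ_{p=0}^{n} C(n,p) D^p(u^p f) D^{n-p}(u^{-p} g)`,
with derivatives taken within the interval `J`. -/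
noncomputable def Phi (J : Set ℝ) (n : ℕ) (u f g : ℝ → ℂ) : ℝ → ℂ :=
  fun t => ∑ p ∈ Finset.range (n + 1), (n.choose p : ℂ) *
    iteratedDerivWithin p (u ^ p * f) J t *
    iteratedDerivWithin (n - p) (u⁻¹ ^ p * g) J t

/-- Leibniz rule for `iteratedDerivWithin`. -/
theorem leibnizWithin {J : Set ℝ} (hJ : UniqueDiffOn ℝ J) :
    ∀ (n : ℕ) (f g : ℝ → ℂ), ContDiffOn ℝ n f J → ContDiffOn ℝ n g J →
      ∀ t ∈ J, iteratedDerivWithin n (f * g) J t =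
        ∑ i ∈ range (n + 1), (n.choose i : ℂ) *
          iteratedDerivWithin i f J t * iteratedDerivWithin (n - i) g J t := by
  intro n
  induction n with
  | zero =>
    intro f g hf hg t ht
    simp [iteratedDerivWithin_zero]
  | succ n IH =>
    intro f g hf hg t ht
    have hfn : ContDiffOn ℝ n f J := hf.of_le (by exact_mod_cast Nat.le_succ n)
    have hgn : ContDiffOn ℝ n g J := hg.of_le (by exact_mod_cast Nat.le_succ n)
    have hf' : ContDiffOn ℝ n (derivWithin f J) J :=
      hf.derivWithin hJ (by exact_mod_cast le_rfl)
    have hg' : ContDiffOn ℝ n (derivWithin g J) J :=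
      hg.derivWithin hJ (by exact_mod_cast le_rfl)
    have h1 : iteratedDerivWithin (n + 1) (f * g) J t
        = iteratedDerivWithin n (derivWithin f J * g + f * derivWithin g J) J t := by
      rw [iteratedDerivWithin_succ']
      refine iteratedDerivWithin_congr ?_ ht
      intro y hy
      have hfd : DifferentiableWithinAt ℝ f J y :=
        (hf.differentiableOn (by simp)) y hy
      have hgd : DifferentiableWithinAt ℝ g J y :=
        (hg.differentiableOn (by simp)) y hy
      have := derivWithin_mul hfd hgd
      simpa [Pi.mul_apply, Pi.add_apply] using this
    have hfg1 : ContDiffOn ℝ n (derivWithin f J * g) J := hf'.mul hgn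
    have hfg2 : ContDiffOn ℝ n (f * derivWithin g J) J := hfn.mul hg'
    rw [h1, iteratedDerivWithin_add ht hJ (hfg1 t ht) (hfg2 t ht),
      IH _ _ hf' hgn t ht, IH _ _ hfn hg' t ht]
    -- rewrite derivatives of derivWithin
    have e1 : ∀ i : ℕ, iteratedDerivWithin i (derivWithin f J) J t
        = iteratedDerivWithin (i + 1) f J t := fun i =>
      (congrFun iteratedDerivWithin_succ' t).symm
    have e2 : ∀ i : ℕ, iteratedDerivWithin i (derivWithin g J) J t
        = iteratedDerivWithin (i + 1) g J t := fun i =>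
      (congrFun iteratedDerivWithin_succ' t).symm
    have hS1 : ∑ i ∈ range (n + 1), (n.choose i : ℂ) *
          iteratedDerivWithin i (derivWithin f J) J t * iteratedDerivWithin (n - i) g J t
        = ∑ i ∈ range (n + 1), (n.choose i : ℂ) *
          iteratedDerivWithin (i + 1) f J t * iteratedDerivWithin (n + 1 - (i + 1)) g J t := by
      refine Finset.sum_congr rfl fun i hi => ?_
      rw [e1, Nat.succ_sub_succ]
    have hS2 : ∑ i ∈ range (n + 1), (n.choose i : ℂ) *
          iteratedDerivWithin i f J t * iteratedDerivWithin (n - i) (derivWithin g J) J t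
        = ∑ i ∈ range (n + 1), (n.choose i : ℂ) *
          iteratedDerivWithin i f J t * iteratedDerivWithin (n + 1 - i) g J t := by
      refine Finset.sum_congr rfl fun i hi => ?_
      have hi' : i ≤ n := Nat.lt_succ_iff.mp (Finset.mem_range.mp hi)
      rw [e2, (show n - i + 1 = n + 1 - i by omega)]
    rw [hS1, hS2]
    -- now the binomial recombination
    rw [Finset.sum_range_succ' (fun i => ((n + 1).choose i : ℂ) *
      iteratedDerivWithin i f J t * iteratedDerivWithin (n + 1 - i) g J t) (n + 1)]
    have pascal : ∀ i : ℕ, (((n + 1).choose (i + 1) : ℕ) : ℂ)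
        = (n.choose i : ℂ) + (n.choose (i + 1) : ℂ) := by
      intro i
      rw [Nat.choose_succ_succ]
      push_cast
      ring
    have split : ∑ i ∈ range (n + 1), ((n + 1).choose (i + 1) : ℂ) *
          iteratedDerivWithin (i + 1) f J t * iteratedDerivWithin (n + 1 - (i + 1)) g J t
        = (∑ i ∈ range (n + 1), (n.choose i : ℂ) *
            iteratedDerivWithin (i + 1) f J t * iteratedDerivWithin (n + 1 - (i + 1)) g J t)
          + ∑ i ∈ range (n + 1), (n.choose (i + 1) : ℂ) *
            iteratedDerivWithin (i + 1) f J t * iteratedDerivWithin (n + 1 - (i + 1)) g J t := by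
      rw [← Finset.sum_add_distrib]
      refine Finset.sum_congr rfl fun i hi => ?_
      rw [pascal]
      ring
    rw [split]
    have tail : (∑ i ∈ range (n + 1), (n.choose (i + 1) : ℂ) *
          iteratedDerivWithin (i + 1) f J t * iteratedDerivWithin (n + 1 - (i + 1)) g J t)
          + ((n + 1).choose 0 : ℂ) * iteratedDerivWithin 0 f J t *
            iteratedDerivWithin (n + 1 - 0) g J t
        = ∑ i ∈ range (n + 1), (n.choose i : ℂ) *
            iteratedDerivWithin i f J t * iteratedDerivWithin (n + 1 - i) g J t := by
      have := Finset.sum_range_succ' (fun i => (n.choose i : ℂ) *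
        iteratedDerivWithin i f J t * iteratedDerivWithin (n + 1 - i) g J t) (n + 1)
      rw [Finset.sum_range_succ (fun i => (n.choose i : ℂ) *
        iteratedDerivWithin i f J t * iteratedDerivWithin (n + 1 - i) g J t) (n + 1)] at this
      simp only [Nat.choose_succ_self, Nat.cast_zero, zero_mul, add_zero, Nat.choose_zero_right,
        Nat.cast_one] at this ⊢
      linear_combination -this
    rw [add_assoc, tail]

/-- multinomial symmetry -/
theorem choose4 (x y z w n : ℕ) (h : x + y + z + w = n) :
    n.choose (x + y) * (x + y).choose x * (z + w).choose z
      = n.choose (y + w) * (y + w).choose y * (x + z).choose x := by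
  have aux : ∀ a b c d : ℕ, a + b + c + d = n →
      n.choose (a + b) * (a + b).choose a * (c + d).choose c * (a ! * b ! * c ! * d !) = n ! := by
    intro a b c d habcd
    have h1 : (a + b).choose a * a ! * b ! = (a + b)! := by
      have := Nat.choose_mul_factorial_mul_factorial (Nat.le_add_right a b)
      simpa [Nat.add_sub_cancel_left] using this
    have h2 : (c + d).choose c * c ! * d ! = (c + d)! := by
      have := Nat.choose_mul_factorial_mul_factorial (Nat.le_add_right c d)
      simpa [Nat.add_sub_cancel_left] using this
    have h3 : n.choose (a + b) * (a + b)! * (c + d)! = n ! := by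
      have := Nat.choose_mul_factorial_mul_factorial (show a + b ≤ n by omega)
      rwa [(show n - (a + b) = c + d by omega)] at this
    calc n.choose (a + b) * (a + b).choose a * (c + d).choose c * (a ! * b ! * c ! * d !)
        = n.choose (a + b) * (((a + b).choose a * a ! * b !) * ((c + d).choose c * c ! * d !)) := by
          ring
      _ = n.choose (a + b) * (a + b)! * (c + d)! := by rw [h1, h2]; ring
      _ = n ! := h3
  have hA := aux x y z w h
  have hB := aux y w x z (by omega)
  have hpos : 0 < x ! * y ! * z ! * w ! :=
    Nat.mul_pos (Nat.mul_pos (Nat.mul_pos (Nat.factorial_pos x) (Nat.factorial_pos y))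
      (Nat.factorial_pos z)) (Nat.factorial_pos w)
  refine Nat.eq_of_mul_eq_mul_right hpos ?_
  rw [hA]
  calc n ! = n.choose (y + w) * (y + w).choose y * (x + z).choose x * (y ! * w ! * x ! * z !) :=
        hB.symm
    _ = n.choose (y + w) * (y + w).choose y * (x + z).choose x * (x ! * y ! * z ! * w !) := by
        ring

theorem coeff_eq {n p i j : ℕ} (hp : p ≤ n) (hi : i ≤ p) (hj : j ≤ n - p) :
    n.choose p * p.choose i * (n - p).choose j
      = n.choose (n - i - j) * (n - i - j).choose (p - i) * (n - (n - i - j)).choose i := by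
  obtain ⟨y, rfl⟩ : ∃ y, p = i + y := ⟨p - i, by omega⟩
  obtain ⟨w, hw⟩ : ∃ w, n - (i + y) = j + w := ⟨n - (i + y) - j, by omega⟩
  have hn : i + y + j + w = n := by omega
  rw [hw, (show n - i - j = y + w by omega), (show i + y - i = y by omega),
    (show n - (y + w) = i + j by omega)]
  exact choose4 i y j w n hn

theorem tripleToSigma (N : ℕ) (s t : ℕ → Finset ℕ) (F : ℕ → ℕ → ℕ → ℂ) :
    ∑ x ∈ (Finset.range (N + 1)).sigma (fun p => (s p) ×ˢ (t p)), F x.1 x.2.1 x.2.2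
      = ∑ p ∈ Finset.range (N + 1), ∑ i ∈ s p, ∑ j ∈ t p, F p i j := by
  rw [Finset.sum_sigma]
  exact Finset.sum_congr rfl fun p _ => Finset.sum_product (s p) (t p) (fun x => F p x.1 x.2)

theorem mainPhi (J : Set ℝ) (hJ : UniqueDiffOn ℝ J) (u : ℝ → ℂ) (hu0 : ∀ t ∈ J, u t ≠ 0) :
    ∀ n : ℕ, ContDiffOn ℝ n u J → ∀ f g : ℝ → ℂ,
      ContDiffOn ℝ n f J → ContDiffOn ℝ n g J →
      ∀ t ∈ J, Phi J n u f g t =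
        ∑ r ∈ Finset.range (n + 1), (n.choose r : ℂ) * Phi J (n - r) u 1 1 t *
          iteratedDerivWithin r (f * g) J t := by
  intro n
  induction n using Nat.strong_induction_on with
  | _ n IH =>
  intro hu f g hf hg t ht
  have hcast : ∀ {k m : ℕ}, k ≤ m → ((k : WithTop ℕ∞) ≤ (m : WithTop ℕ∞)) :=
    fun h => by exact_mod_cast h
  have hui : ContDiffOn ℝ n u⁻¹ J := hu.inv hu0
  have hup : ∀ p : ℕ, ContDiffOn ℝ n (u ^ p) J := fun p => hu.pow p
  have huip : ∀ p : ℕ, ContDiffOn ℝ n (u⁻¹ ^ p) J := fun p => hui.pow p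
  -- Step 1 : expand LHS by Leibniz
  have step1 : Phi J n u f g t =
      ∑ p ∈ Finset.range (n + 1), ∑ i ∈ Finset.range (p + 1), ∑ j ∈ Finset.range (n - p + 1),
        ((n.choose p * p.choose i * (n - p).choose j : ℕ) : ℂ) *
          (iteratedDerivWithin i (u ^ p) J t * iteratedDerivWithin (p - i) f J t *
            (iteratedDerivWithin j (u⁻¹ ^ p) J t * iteratedDerivWithin (n - p - j) g J t)) := by
    rw [Phi]
    refine Finset.sum_congr rfl fun p hp => ?_
    have hpn : p ≤ n := Nat.lt_succ_iff.mp (Finset.mem_range.mp hp)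
    rw [leibnizWithin hJ p (u ^ p) f ((hup p).of_le (hcast hpn)) (hf.of_le (hcast hpn)) t ht,
      leibnizWithin hJ (n - p) (u⁻¹ ^ p) g ((huip p).of_le (hcast (Nat.sub_le n p)))
        (hg.of_le (hcast (Nat.sub_le n p))) t ht]
    rw [mul_assoc, Finset.sum_mul_sum, Finset.mul_sum]
    refine Finset.sum_congr rfl fun i hi => ?_
    rw [Finset.mul_sum]
    refine Finset.sum_congr rfl fun j hj => ?_
    push_cast
    ring
  -- Step 2 : reindex the triple sum
  have step2 : (∑ p ∈ Finset.range (n + 1), ∑ i ∈ Finset.range (p + 1),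
        ∑ j ∈ Finset.range (n - p + 1),
        ((n.choose p * p.choose i * (n - p).choose j : ℕ) : ℂ) *
          (iteratedDerivWithin i (u ^ p) J t * iteratedDerivWithin (p - i) f J t *
            (iteratedDerivWithin j (u⁻¹ ^ p) J t * iteratedDerivWithin (n - p - j) g J t)))
      = ∑ r ∈ Finset.range (n + 1), ∑ a ∈ Finset.range (r + 1),
          ∑ q ∈ Finset.range (n - r + 1),
        ((n.choose r * r.choose a * (n - r).choose q : ℕ) : ℂ) *
          (iteratedDerivWithin q (u ^ (q + a)) J t * iteratedDerivWithin a f J t *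
            (iteratedDerivWithin (n - r - q) (u⁻¹ ^ (q + a)) J t * iteratedDerivWithin (r - a) g J t)) := by
    rw [← tripleToSigma n (fun p => Finset.range (p + 1)) (fun p => Finset.range (n - p + 1))
        (fun p i j => ((n.choose p * p.choose i * (n - p).choose j : ℕ) : ℂ) *
          (iteratedDerivWithin i (u ^ p) J t * iteratedDerivWithin (p - i) f J t *
            (iteratedDerivWithin j (u⁻¹ ^ p) J t * iteratedDerivWithin (n - p - j) g J t)))]
    rw [← tripleToSigma n (fun r => Finset.range (r + 1)) (fun r => Finset.range (n - r + 1))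
        (fun r a q => ((n.choose r * r.choose a * (n - r).choose q : ℕ) : ℂ) *
          (iteratedDerivWithin q (u ^ (q + a)) J t * iteratedDerivWithin a f J t *
            (iteratedDerivWithin (n - r - q) (u⁻¹ ^ (q + a)) J t * iteratedDerivWithin (r - a) g J t)))]
    refine Finset.sum_nbij' (fun x => ⟨n - x.2.1 - x.2.2, (x.1 - x.2.1, x.2.1)⟩)
      (fun x => ⟨x.2.2 + x.2.1, (x.2.2, n - x.1 - x.2.2)⟩) ?_ ?_ ?_ ?_ ?_
    · rintro ⟨p, i, j⟩ hx
      simp only [Finset.mem_sigma, Finset.mem_product, Finset.mem_range] at hx ⊢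
      omega
    · rintro ⟨r, a, q⟩ hx
      simp only [Finset.mem_sigma, Finset.mem_product, Finset.mem_range] at hx ⊢
      omega
    · rintro ⟨p, i, j⟩ hx
      simp only [Finset.mem_sigma, Finset.mem_product, Finset.mem_range] at hx
      show (⟨i + (p - i), (i, n - (n - i - j) - i)⟩ : Σ _ : ℕ, ℕ × ℕ) = ⟨p, (i, j)⟩
      rw [(show i + (p - i) = p by omega), (show n - (n - i - j) - i = j by omega)]
    · rintro ⟨r, a, q⟩ hx
      simp only [Finset.mem_sigma, Finset.mem_product, Finset.mem_range] at hx
      show (⟨n - q - (n - r - q), (q + a - q, q)⟩ : Σ _ : ℕ, ℕ × ℕ) = ⟨r, (a, q)⟩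
      rw [(show n - q - (n - r - q) = r by omega), (show q + a - q = a by omega)]
    · rintro ⟨p, i, j⟩ hx
      simp only [Finset.mem_sigma, Finset.mem_product, Finset.mem_range] at hx
      have hp : p ≤ n := Nat.lt_succ_iff.mp hx.1
      have hi : i ≤ p := Nat.lt_succ_iff.mp hx.2.1
      have hj : j ≤ n - p := Nat.lt_succ_iff.mp hx.2.2
      show ((n.choose p * p.choose i * (n - p).choose j : ℕ) : ℂ) * _
        = ((n.choose (n - i - j) * (n - i - j).choose (p - i)
            * (n - (n - i - j)).choose i : ℕ) : ℂ) * _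
      rw [(show i + (p - i) = p by omega), (show n - (n - i - j) - i = j by omega),
        (show n - i - j - (p - i) = n - p - j by omega), coeff_eq hp hi hj]
  -- key lemma : Phi (n-r) u (u^a) (u⁻¹^a) = Phi (n-r) u 1 1 on J
  have key : ∀ r a : ℕ, a ≤ r → r ≤ n →
      Phi J (n - r) u (u ^ a) (u⁻¹ ^ a) t = Phi J (n - r) u 1 1 t := by
    intro r a har hrn
    rcases Nat.eq_zero_or_pos a with rfl | ha
    · simp
    · have hm : n - r < n := by omega
      have hum : ContDiffOn ℝ (n - r) u J := hu.of_le (hcast (Nat.sub_le n r))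
      have IH' := IH (n - r) hm hum (u ^ a) (u⁻¹ ^ a) (hum.pow a) ((hum.inv hu0).pow a) t ht
      have hcongr : ∀ s : ℕ, iteratedDerivWithin s (u ^ a * u⁻¹ ^ a) J t
          = iteratedDerivWithin s (1 : ℝ → ℂ) J t := by
        intro s
        refine iteratedDerivWithin_congr (fun y hy => ?_) ht
        simp only [Pi.mul_apply, Pi.pow_apply, Pi.inv_apply, Pi.one_apply]
        rw [← mul_pow, mul_inv_cancel₀ (hu0 y hy), one_pow]
      have hone : ∀ s : ℕ, s ≠ 0 → iteratedDerivWithin s (1 : ℝ → ℂ) J t = 0 := by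
        intro s hs
        rw [iteratedDerivWithin_eq_iteratedFDerivWithin]
        rw [show (1 : ℝ → ℂ) = (fun _ : ℝ => (1 : ℂ)) from rfl]
        rw [iteratedFDerivWithin_const_of_ne hs]
        simp
      rw [IH', Finset.sum_range_succ']
      have hz : ∑ s ∈ Finset.range (n - r), (((n - r).choose (s + 1) : ℂ) *
            Phi J (n - r - (s + 1)) u 1 1 t *
            iteratedDerivWithin (s + 1) (u ^ a * u⁻¹ ^ a) J t) = 0 := by
        refine Finset.sum_eq_zero fun s hs => ?_
        rw [hcongr, hone (s + 1) (Nat.succ_ne_zero s)]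
        ring
      rw [hz, zero_add, hcongr 0]
      simp [iteratedDerivWithin_zero]
  -- Step 3 : regroup and conclude
  rw [step1, step2]
  have rhs : ∀ r, r ≤ n → iteratedDerivWithin r (f * g) J t
      = ∑ a ∈ Finset.range (r + 1), (r.choose a : ℂ) *
          iteratedDerivWithin a f J t * iteratedDerivWithin (r - a) g J t :=
    fun r hr => leibnizWithin hJ r f g (hf.of_le (hcast hr)) (hg.of_le (hcast hr)) t ht
  refine Finset.sum_congr rfl fun r hr => ?_
  have hrn : r ≤ n := Nat.lt_succ_iff.mp (Finset.mem_range.mp hr)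
  rw [rhs r hrn, Finset.mul_sum]
  refine Finset.sum_congr rfl fun a harr => ?_
  have har : a ≤ r := Nat.lt_succ_iff.mp (Finset.mem_range.mp harr)
  have inner : (∑ q ∈ Finset.range (n - r + 1),
        ((n.choose r * r.choose a * (n - r).choose q : ℕ) : ℂ) *
          (iteratedDerivWithin q (u ^ (q + a)) J t * iteratedDerivWithin a f J t *
            (iteratedDerivWithin (n - r - q) (u⁻¹ ^ (q + a)) J t * iteratedDerivWithin (r - a) g J t)))
      = ((n.choose r * r.choose a : ℕ) : ℂ) * (iteratedDerivWithin a f J t * iteratedDerivWithin (r - a) g J t) *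
          Phi J (n - r) u (u ^ a) (u⁻¹ ^ a) t := by
    rw [Phi, Finset.mul_sum]
    refine Finset.sum_congr rfl fun q hq => ?_
    rw [(show u ^ q * u ^ a = u ^ (q + a) from (pow_add u q a).symm),
      (show u⁻¹ ^ q * u⁻¹ ^ a = u⁻¹ ^ (q + a) from (pow_add u⁻¹ q a).symm)]
    push_cast
    ring
  rw [inner, key r a har hrn]
  push_cast
  ring

theorem stmt0 (J : Set ℝ) (hJconn : J.OrdConnected) (hJuniq : UniqueDiffOn ℝ J)
    (n : ℕ) (u f g : ℝ → ℂ)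
    (hu : ContDiffOn ℝ n u J) (hf : ContDiffOn ℝ n f J) (hg : ContDiffOn ℝ n g J)
    (hu0 : ∀ t ∈ J, u t ≠ 0) :
    ∀ t ∈ J, Phi J n u f g t =
      ∑ r ∈ Finset.range (n + 1), (n.choose r : ℂ) * Phi J (n - r) u 1 1 t *
        iteratedDerivWithin r (f * g) J t := by
  exact mainPhi J hJuniq u hu0 n hu f g hf hg
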